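/- Let f be μ-strongly convex with minimizer x⋆, each fᵢ have H-Lipschitz Hessian, M ≥ H, and suppose f(wᵢ) − f(x⋆) ≤ 2μ³/(M+H)² for all i. Then the cubic Newton update x⁺ (minimizer of the averaged cubically regularized quadratic model at w₁,…,wₙ) satisfies f(x⁺) − f(x⋆) ≤ 2μ³/(M+H)², i.e., the sublevel condition is preserved by the update. -/

import Mathlib

set_option maxHeartbeats 1000000

open scoped RealInnerProductSpace
open intervalIntegral

lemma fderiv_eq_inner_gradient {E : Type*} [NormedAddCommGroup E] [InnerProductSpace ℝ E]
    [CompleteSpace E] (g : E → ℝ) (y v : E) :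
    fderiv ℝ g y v = ⟪gradient g y, v⟫ := by
  rw [gradient, InnerProductSpace.toDual_symm_apply]

lemma taylor_cubic_bound {E : Type*} [NormedAddCommGroup E] [InnerProductSpace ℝ E]
    [CompleteSpace E] (g : E → ℝ) (hg : ContDiff ℝ 2 g) (H : ℝ) (hH : 0 ≤ H)
    (hLip : ∀ x y : E, ‖fderiv ℝ (gradient g) x - fderiv ℝ (gradient g) y‖ ≤ H * ‖x - y‖)
    (w x : E) :
    |g x - (g w + ⟪gradient g w, x - w⟫
      + (1 / 2) * ⟪fderiv ℝ (gradient g) w (x - w) , x - w⟫)| ≤ H / 6 * ‖x - w‖ ^ 3 := by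
  set u := x - w with hu
  set G := gradient g with hGdef
  have hG1 : ContDiff ℝ 1 G := by
    have h1 : ContDiff ℝ 1 (fderiv ℝ g) := hg.fderiv_right (by norm_num)
    have : G = fun y => (InnerProductSpace.toDual ℝ E).symm (fderiv ℝ g y) := rfl
    rw [this]
    exact ((InnerProductSpace.toDual ℝ E).symm.contDiff).comp h1
  have hGdiff : Differentiable ℝ G := hG1.differentiable (by norm_num)
  have hgdiff : Differentiable ℝ g := hg.differentiable (by norm_num)
  set c : ℝ → E := fun t => w + t • u with hc
  have hct : ∀ t : ℝ, HasDerivAt c u t := fun t => by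
    simpa [c] using ((hasDerivAt_id t).smul_const u).const_add w
  set q : ℝ → ℝ := fun t => ⟪G (c t), u⟫ with hq
  set r : ℝ → ℝ := fun t => ⟪(fderiv ℝ G (c t)) u, u⟫ with hr
  have hp' : ∀ t : ℝ, HasDerivAt (fun t => g (c t)) (q t) t := by
    intro t
    have := (hgdiff (c t)).hasFDerivAt.comp_hasDerivAt t (hct t)
    rw [fderiv_eq_inner_gradient] at this
    exact this
  have hq' : ∀ t : ℝ, HasDerivAt q (r t) t := by
    intro t
    have h1 : HasDerivAt (fun t => G (c t)) ((fderiv ℝ G (c t)) u) t :=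
      (hGdiff (c t)).hasFDerivAt.comp_hasDerivAt t (hct t)
    have := h1.inner ℝ (hasDerivAt_const t u)
    simpa [r] using this
  have hccont : Continuous c := by fun_prop
  have hrcont : Continuous r := by
    have h1 : Continuous (fderiv ℝ G) := hG1.continuous_fderiv (by norm_num)
    exact ((h1.comp hccont).clm_apply continuous_const).inner continuous_const
  have hqcont : Continuous q := (hG1.continuous.comp hccont).inner continuous_const
  have hu3 : (0:ℝ) ≤ ‖u‖ ^ 3 := by positivity
  have hrbound : ∀ t ∈ Set.Icc (0:ℝ) 1, |r t - r 0| ≤ H * ‖u‖ ^ 3 * t := by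
    intro t ht
    have heq : r t - r 0 = ⟪(fderiv ℝ G (c t) - fderiv ℝ G (c 0)) u, u⟫ := by
      simp [r, ContinuousLinearMap.sub_apply, inner_sub_left]
    have h1 : |⟪(fderiv ℝ G (c t) - fderiv ℝ G (c 0)) u, u⟫|
        ≤ ‖(fderiv ℝ G (c t) - fderiv ℝ G (c 0)) u‖ * ‖u‖ := abs_real_inner_le_norm _ _
    have h2 : ‖(fderiv ℝ G (c t) - fderiv ℝ G (c 0)) u‖
        ≤ ‖fderiv ℝ G (c t) - fderiv ℝ G (c 0)‖ * ‖u‖ :=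
      (fderiv ℝ G (c t) - fderiv ℝ G (c 0)).le_opNorm u
    have h3 : ‖fderiv ℝ G (c t) - fderiv ℝ G (c 0)‖ ≤ H * ‖c t - c 0‖ := hLip _ _
    have h4 : ‖c t - c 0‖ = t * ‖u‖ := by
      have : c t - c 0 = t • u := by simp [c]
      rw [this, norm_smul, Real.norm_eq_abs, abs_of_nonneg ht.1]
    rw [heq]
    have hun : (0:ℝ) ≤ ‖u‖ := norm_nonneg _
    refine h1.trans ?_
    have h2' : ‖(fderiv ℝ G (c t) - fderiv ℝ G (c 0)) u‖ ≤ H * (t * ‖u‖) * ‖u‖ := by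
      refine h2.trans (mul_le_mul_of_nonneg_right ?_ hun)
      rw [← h4]; exact h3
    refine (mul_le_mul_of_nonneg_right h2' hun).trans_eq ?_
    ring
  have hqbound : ∀ s ∈ Set.Icc (0:ℝ) 1, |q s - q 0 - s * r 0| ≤ H * ‖u‖ ^ 3 * s ^ 2 / 2 := by
    intro s hs
    have hftc : ∫ t in (0:ℝ)..s, r t = q s - q 0 :=
      intervalIntegral.integral_eq_sub_of_hasDerivAt (fun t _ => hq' t)
        (hrcont.intervalIntegrable 0 s)
    have heq : q s - q 0 - s * r 0 = ∫ t in (0:ℝ)..s, (r t - r 0) := by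
      rw [intervalIntegral.integral_sub (hrcont.intervalIntegrable 0 s)
        intervalIntegrable_const, hftc, intervalIntegral.integral_const]
      simp [mul_comm]
    rw [heq]
    have hb : ∀ᵐ t ∂(MeasureTheory.volume.restrict (Set.uIoc (0:ℝ) s)),
        ‖r t - r 0‖ ≤ H * ‖u‖ ^ 3 * t := by
      refine MeasureTheory.ae_restrict_of_forall_mem measurableSet_uIoc fun t ht => ?_
      rw [Set.uIoc_of_le hs.1] at ht
      exact hrbound t ⟨le_of_lt ht.1, ht.2.trans hs.2⟩
    have hbd := intervalIntegral.norm_integral_le_of_norm_le (g := fun t => H * ‖u‖ ^ 3 * t) hs.1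
      ((MeasureTheory.ae_restrict_iff' measurableSet_Ioc).mp (by rwa [Set.uIoc_of_le hs.1] at hb))
      ((continuous_const.mul continuous_id).intervalIntegrable 0 s :
        IntervalIntegrable (fun t => H * ‖u‖ ^ 3 * t) MeasureTheory.volume 0 s)
    rw [Real.norm_eq_abs] at hbd
    refine hbd.trans ?_
    have hval : (∫ t in (0:ℝ)..s, H * ‖u‖ ^ 3 * t) = H * ‖u‖ ^ 3 * s ^ 2 / 2 := by
      rw [intervalIntegral.integral_const_mul, integral_id]; ring
    rw [hval]
  have hftc2 : ∫ s in (0:ℝ)..1, q s = g (c 1) - g (c 0) :=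
    intervalIntegral.integral_eq_sub_of_hasDerivAt (fun s _ => hp' s)
      (hqcont.intervalIntegrable 0 1)
  have key : g (c 1) - g (c 0) - q 0 - r 0 / 2
      = ∫ s in (0:ℝ)..1, (q s - q 0 - s * r 0) := by
    have hiq : IntervalIntegrable q MeasureTheory.volume 0 1 :=
      hqcont.intervalIntegrable 0 1
    rw [intervalIntegral.integral_sub (hiq.sub intervalIntegrable_const)
        ((by fun_prop : Continuous fun s : ℝ => s * r 0).intervalIntegrable 0 1),
      intervalIntegral.integral_sub hiq intervalIntegrable_const, hftc2,
      intervalIntegral.integral_const, intervalIntegral.integral_mul_const, integral_id]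
    first
    | (norm_num; ring)
    | norm_num
    | ring
  have hb2 : ∀ᵐ s ∂(MeasureTheory.volume.restrict (Set.uIoc (0:ℝ) 1)),
      ‖q s - q 0 - s * r 0‖ ≤ H * ‖u‖ ^ 3 * s ^ 2 / 2 := by
    refine MeasureTheory.ae_restrict_of_forall_mem measurableSet_uIoc fun s hs => ?_
    rw [Set.uIoc_of_le zero_le_one] at hs
    exact hqbound s ⟨le_of_lt hs.1, hs.2⟩
  have hint : IntervalIntegrable (fun s => H * ‖u‖ ^ 3 * s ^ 2 / 2) MeasureTheory.volume 0 1 :=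
    (((continuous_const.mul (continuous_pow 2)).div_const 2).intervalIntegrable 0 1)
  have hfin := intervalIntegral.norm_integral_le_of_norm_le zero_le_one
    ((MeasureTheory.ae_restrict_iff' measurableSet_Ioc).mp (by rwa [Set.uIoc_of_le zero_le_one] at hb2)) hint
  rw [Real.norm_eq_abs, ← key] at hfin
  have hval2 : (∫ s in (0:ℝ)..1, H * ‖u‖ ^ 3 * s ^ 2 / 2) = H / 6 * ‖u‖ ^ 3 := by
    have hfeq : (fun s : ℝ => H * ‖u‖ ^ 3 * s ^ 2 / 2)
        = fun s : ℝ => (H * ‖u‖ ^ 3 / 2) * s ^ 2 := by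
      funext s; ring
    rw [hfeq, intervalIntegral.integral_const_mul, integral_pow]
    first
    | (norm_num; ring)
    | norm_num
    | ring
  have habs : |H / 6 * ‖u‖ ^ 3| = H / 6 * ‖u‖ ^ 3 := abs_of_nonneg (by positivity)
  rw [hval2] at hfin
  have hc1 : c 1 = x := by simp [c, u]
  have hc0 : c 0 = w := by simp [c]
  have hq0 : q 0 = ⟪G w, u⟫ := by rw [hq]; simp only [hc0]
  have hr0 : r 0 = ⟪(fderiv ℝ G w) u, u⟫ := by rw [hr]; simp only [hc0]
  have hfinal : g x - (g w + ⟪G w, u⟫ + (1/2) * ⟪(fderiv ℝ G w) u, u⟫)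
      = g (c 1) - g (c 0) - q 0 - r 0 / 2 := by
    rw [hc1, hc0, hq0, hr0]; ring
  rw [hfinal]
  exact hfin

theorem cubic_newton_sublevel_invariance
    (d n : ℕ) (hn : 0 < n)
    (f : Fin n → EuclideanSpace ℝ (Fin d) → ℝ)
    (μ H M : ℝ) (hμ : 0 < μ) (hH : 0 ≤ H) (hM : H ≤ M)
    (hf : ∀ i, ContDiff ℝ 2 (f i))
    (hLip : ∀ i, ∀ x y : EuclideanSpace ℝ (Fin d),
      ‖fderiv ℝ (gradient (f i)) x - fderiv ℝ (gradient (f i)) y‖ ≤ H * ‖x - y‖)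
    (F : EuclideanSpace ℝ (Fin d) → ℝ)
    (hF : F = fun x => (n : ℝ)⁻¹ * ∑ i, f i x)
    (hsc : ∀ x y : EuclideanSpace ℝ (Fin d),
      F y + ⟪gradient F y, x - y⟫ + μ / 2 * ‖x - y‖ ^ 2 ≤ F x)
    (xstar : EuclideanSpace ℝ (Fin d)) (hmin : ∀ x, F xstar ≤ F x)
    (w : Fin n → EuclideanSpace ℝ (Fin d))
    (φ : Fin n → EuclideanSpace ℝ (Fin d) → ℝ)
    (hφ : ∀ i x, φ i x = f i (w i) + ⟪gradient (f i) (w i), x - w i⟫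
      + (1 / 2) * ⟪fderiv ℝ (gradient (f i)) (w i) (x - w i), x - w i⟫)
    (xplus : EuclideanSpace ℝ (Fin d))
    (hxplus : ∀ y : EuclideanSpace ℝ (Fin d),
      (n : ℝ)⁻¹ * ∑ i, (φ i xplus + M / 6 * ‖xplus - w i‖ ^ 3)
        ≤ (n : ℝ)⁻¹ * ∑ i, (φ i y + M / 6 * ‖y - w i‖ ^ 3))
    (hinit : ∀ i, F (w i) - F xstar ≤ 2 * μ ^ 3 / (M + H) ^ 2) :
    F xplus - F xstar ≤ 2 * μ ^ 3 / (M + H) ^ 2 := by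
  have hn' : (0:ℝ) < (n:ℝ) := by exact_mod_cast hn
  have hninv : (0:ℝ) ≤ (n:ℝ)⁻¹ := by positivity
  -- gradient of F vanishes at xstar
  have hFdiff : Differentiable ℝ F := by
    rw [hF]
    exact (Differentiable.fun_sum fun i _ =>
      ((hf i).differentiable (by norm_num))).const_mul _
  have hfder0 : fderiv ℝ F xstar = 0 :=
    IsLocalMin.fderiv_eq_zero (Filter.Eventually.of_forall hmin)
  have hgrad0 : gradient F xstar = 0 := by
    rw [gradient, hfder0, map_zero]
  -- strong convexity distance bound
  have hdist : ∀ i, μ / 2 * ‖xstar - w i‖ ^ 2 ≤ F (w i) - F xstar := by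
    intro i
    have h := hsc (w i) xstar
    rw [hgrad0, inner_zero_left, norm_sub_rev] at h
    linarith
  -- per-term key bound
  have hkey : ∀ i, (M + H) / 6 * ‖xstar - w i‖ ^ 3 ≤ 2 * μ ^ 3 / (M + H) ^ 2 := by
    intro i
    by_cases hc : M + H = 0
    · rw [hc]
      norm_num
    · have hcpos : 0 < M + H := lt_of_le_of_ne (by linarith) (Ne.symm hc)
      have h5 : ‖xstar - w i‖ ^ 2 ≤ (2 * μ / (M + H)) ^ 2 := by
        have h1 := hdist i
        have h2 := hinit i
        have h3 : μ / 2 * ‖xstar - w i‖ ^ 2 ≤ 2 * μ ^ 3 / (M + H) ^ 2 := by linarith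
        have hc2 : (0:ℝ) < (M + H) ^ 2 := by positivity
        have h4 := (le_div_iff₀ hc2).mp h3
        rw [div_pow, le_div_iff₀ hc2]
        nlinarith [hμ, h4]
      have h6 : ‖xstar - w i‖ ≤ 2 * μ / (M + H) :=
        le_of_pow_le_pow_left₀ two_ne_zero (by positivity) h5
      have h7 : ‖xstar - w i‖ ^ 3 ≤ (2 * μ / (M + H)) ^ 3 :=
        pow_le_pow_left₀ (norm_nonneg _) h6 3
      have h8 : (M + H) / 6 * (2 * μ / (M + H)) ^ 3 = 4 / 3 * (μ ^ 3 / (M + H) ^ 2) := by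
        field_simp
        ring
      have h9 : (0:ℝ) ≤ μ ^ 3 / (M + H) ^ 2 := by positivity
      calc (M + H) / 6 * ‖xstar - w i‖ ^ 3
          ≤ (M + H) / 6 * (2 * μ / (M + H)) ^ 3 := by
            apply mul_le_mul_of_nonneg_left h7 (by positivity)
        _ = 4 / 3 * (μ ^ 3 / (M + H) ^ 2) := h8
        _ ≤ 2 * μ ^ 3 / (M + H) ^ 2 := by
            rw [mul_div_assoc]
            linarith
  -- Taylor bounds
  have htay : ∀ i (x : EuclideanSpace ℝ (Fin d)),
      |f i x - φ i x| ≤ H / 6 * ‖x - w i‖ ^ 3 := by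
    intro i x
    rw [hφ]
    exact taylor_cubic_bound (f i) (hf i) H hH (hLip i) (w i) x
  have h1 : ∀ i, f i xplus ≤ φ i xplus + H / 6 * ‖xplus - w i‖ ^ 3 := by
    intro i
    have := abs_le.mp (htay i xplus)
    linarith [this.2]
  have h2 : ∀ i, φ i xstar ≤ f i xstar + H / 6 * ‖xstar - w i‖ ^ 3 := by
    intro i
    have := abs_le.mp (htay i xstar)
    linarith [this.1]
  -- main chain
  have chainA : F xplus ≤ (n : ℝ)⁻¹ * ∑ i, (φ i xplus + M / 6 * ‖xplus - w i‖ ^ 3) := by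
    rw [hF]
    apply mul_le_mul_of_nonneg_left _ hninv
    apply Finset.sum_le_sum
    intro i _
    have hh := h1 i
    have : H / 6 * ‖xplus - w i‖ ^ 3 ≤ M / 6 * ‖xplus - w i‖ ^ 3 := by
      apply mul_le_mul_of_nonneg_right (by linarith) (by positivity)
    linarith
  have chainC : (n : ℝ)⁻¹ * ∑ i, (φ i xstar + M / 6 * ‖xstar - w i‖ ^ 3)
      ≤ (n : ℝ)⁻¹ * ∑ i, (f i xstar + (M + H) / 6 * ‖xstar - w i‖ ^ 3) := by
    apply mul_le_mul_of_nonneg_left _ hninv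
    apply Finset.sum_le_sum
    intro i _
    have hh := h2 i
    nlinarith [norm_nonneg (xstar - w i), pow_nonneg (norm_nonneg (xstar - w i)) 3]
  have chainD : (n : ℝ)⁻¹ * ∑ i, (f i xstar + (M + H) / 6 * ‖xstar - w i‖ ^ 3)
      ≤ F xstar + 2 * μ ^ 3 / (M + H) ^ 2 := by
    rw [Finset.sum_add_distrib, mul_add, hF]
    have hs : ∑ i, (M + H) / 6 * ‖xstar - w i‖ ^ 3
        ≤ ∑ _i : Fin n, 2 * μ ^ 3 / (M + H) ^ 2 :=
      Finset.sum_le_sum fun i _ => hkey i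
    rw [Finset.sum_const, Finset.card_univ, Fintype.card_fin, nsmul_eq_mul] at hs
    have : (n : ℝ)⁻¹ * ∑ i, (M + H) / 6 * ‖xstar - w i‖ ^ 3
        ≤ (n : ℝ)⁻¹ * ((n : ℝ) * (2 * μ ^ 3 / (M + H) ^ 2)) :=
      mul_le_mul_of_nonneg_left hs hninv
    rw [← mul_assoc, inv_mul_cancel₀ (ne_of_gt hn'), one_mul] at this
    linarith
  have := (chainA.trans (hxplus xstar)).trans (chainC.trans chainD)
  linarith
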